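/- Let (A,σ) be a ring with involution. A sesquilinear form (M,s) over (A,σ) is hyperbolic if and only if there exist submodules M₁, M₂ ≤ M such that M = M₁ ⊕ M₂ (internal direct sum) and s(M₁,M₁) = s(M₂,M₂) = 0. Furthermore, if (M,s) is unimodular and ε-hermitian, then (M,s) is hyperbolic as a sesquilinear form if and only if it is hyperbolic as a unimodular ε-hermitian form. -/

import Mathlib

open CategoryTheory CategoryTheory.Limits

noncomputable section

universe v u

namespace HermCat

variable {C : Type u} [Category.{v} C] [Preadditive C]

/-- A hermitian structure on an additive category `C`: a contravariant additive
functor `*` together with a natural transformation `ω : id → **` satisfying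
`(ω_X)* ∘ ω_{X*} = id_{X*}`. -/
structure HermStructure (C : Type u) [Category.{v} C] [Preadditive C] where
  star : C → C
  starMap : ∀ {X Y : C}, (X ⟶ Y) → (star Y ⟶ star X)
  starMap_id : ∀ X : C, starMap (𝟙 X) = 𝟙 (star X)
  starMap_comp : ∀ {X Y Z : C} (f : X ⟶ Y) (g : Y ⟶ Z),
    starMap (f ≫ g) = starMap g ≫ starMap f
  starMap_add : ∀ {X Y : C} (f g : X ⟶ Y), starMap (f + g) = starMap f + starMap g
  omega : ∀ X : C, X ⟶ star (star X)
  omega_natural : ∀ {X Y : C} (f : X ⟶ Y),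
    f ≫ omega Y = omega X ≫ starMap (starMap f)
  omega_star : ∀ X : C, omega (star X) ≫ starMap (omega X) = 𝟙 (star X)

namespace HermStructure

variable (H : HermStructure C)

/-- The additive-monoid-hom incarnation of `starMap`. -/
def starHom (X Y : C) : (X ⟶ Y) →+ (H.star Y ⟶ H.star X) :=
  AddMonoidHom.mk' H.starMap (fun f g => H.starMap_add f g)

theorem starMap_zero (X Y : C) : H.starMap (0 : X ⟶ Y) = 0 :=
  (H.starHom X Y).map_zero

theorem starMap_neg {X Y : C} (f : X ⟶ Y) : H.starMap (-f) = -H.starMap f :=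
  (H.starHom X Y).map_neg f

theorem starMap_sub {X Y : C} (f g : X ⟶ Y) :
    H.starMap (f - g) = H.starMap f - H.starMap g :=
  (H.starHom X Y).map_sub f g

theorem starMap_nsmul {X Y : C} (n : ℕ) (f : X ⟶ Y) :
    H.starMap (n • f) = n • H.starMap f :=
  (H.starHom X Y).map_nsmul n f

theorem starMap_zsmul {X Y : C} (n : ℤ) (f : X ⟶ Y) :
    H.starMap (n • f) = n • H.starMap f :=
  (H.starHom X Y).map_zsmul n f

/-- An object is reflexive if `ω_X` is an isomorphism. -/
def Reflexive (X : C) : Prop := IsIso (H.omega X)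

/-- A sesquilinear form `s : M ⟶ M*` is unimodular if `s` and `s* ∘ ω_M` are
isomorphisms. -/
def IsUnimodular {M : C} (s : M ⟶ H.star M) : Prop :=
  IsIso s ∧ IsIso (H.omega M ≫ H.starMap s)

/-- A sesquilinear form `s : M ⟶ M*` is `ε`-hermitian if `s = ε • (s* ∘ ω_M)`. -/
def IsEpsHermitian (ε : ℤ) {M : C} (s : M ⟶ H.star M) : Prop :=
  s = ε • (H.omega M ≫ H.starMap s)

/-- `f` is an isometry from `(M, s)` to `(M', s')` if it is an isomorphism with
`s = f* ∘ s' ∘ f`. -/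
def IsIsometry {M M' : C} (s : M ⟶ H.star M) (s' : M' ⟶ H.star M')
    (f : M ⟶ M') : Prop :=
  IsIso f ∧ s = f ≫ s' ≫ H.starMap f

/-- Two sesquilinear forms are isometric if there is an isometry between them. -/
def Isometric {M M' : C} (s : M ⟶ H.star M) (s' : M' ⟶ H.star M') : Prop :=
  ∃ f : M ⟶ M', H.IsIsometry s s' f

section Biprod

variable [HasBinaryBiproducts C]

/-- The underlying object `Q ⊕ Q*` of the hyperbolic form. -/
def hypObj (Q : C) : C := Q ⊞ H.star Q

/-- The hyperbolic `ε`-hermitian form `H_ε(Q)` on `Q ⊕ Q*`, given in matrix form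
by `[[0, id_{Q*}], [ε·ω_Q, 0]]` (composed with the canonical identification
`Q* ⊕ Q** ≅ (Q ⊕ Q*)*`). -/
def hypForm (ε : ℤ) (Q : C) : H.hypObj Q ⟶ H.star (H.hypObj Q) :=
  biprod.lift (biprod.snd) (ε • (biprod.fst ≫ H.omega Q)) ≫
    biprod.desc (H.starMap biprod.fst) (H.starMap biprod.snd)

/-- A form is hyperbolic (as a unimodular `ε`-hermitian form) if it is isometric
to `(Q ⊕ Q*, H_ε(Q))` for some reflexive object `Q`. -/
def IsHyperbolic (ε : ℤ) {M : C} (s : M ⟶ H.star M) : Prop :=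
  ∃ Q : C, H.Reflexive Q ∧ H.Isometric s (H.hypForm ε Q)

/-- The orthogonal sum of two sesquilinear forms. -/
def orthSum {M M' : C} (s : M ⟶ H.star M) (s' : M' ⟶ H.star M') :
    M ⊞ M' ⟶ H.star (M ⊞ M') :=
  biprod.desc (s ≫ H.starMap biprod.fst) (s' ≫ H.starMap biprod.snd)

/-- The "split" form `[[0, f], [g, 0]]` on `M ⊕ N`, where `f : N ⟶ M*` and
`g : M ⟶ N*`. -/
def splitForm {M N : C} (f : N ⟶ H.star M) (g : M ⟶ H.star N) :
    M ⊞ N ⟶ H.star (M ⊞ N) :=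
  biprod.desc (g ≫ H.starMap biprod.snd) (f ≫ H.starMap biprod.fst)

end Biprod

end HermStructure

/-! ## The category of twisted double arrows -/

variable {ι : Type v}

/-- Objects of the category `TDA_I(C)` of twisted double `I`-arrows: quadruples
`(M, N, {f_i}, {g_i})` with `f_i, g_i : M ⟶ N^{*_i}`. -/
structure TDAObj (Hs : ι → HermStructure C) : Type (max u v) where
  M : C
  N : C
  f : ∀ i, M ⟶ (Hs i).star N
  g : ∀ i, M ⟶ (Hs i).star N

namespace TDAObj

variable {Hs : ι → HermStructure C}

/-- Morphisms `(M,N,{f_i},{g_i}) ⟶ (M',N',{f'_i},{g'_i})` in `TDA_I(C)`: pairs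
`(φ, ψ^op)` with `φ : M ⟶ M'`, `ψ : N' ⟶ N`, `f'_i ∘ φ = ψ^{*_i} ∘ f_i` and
`g'_i ∘ φ = ψ^{*_i} ∘ g_i`. -/
@[ext]
structure Hom (Z Z' : TDAObj Hs) : Type v where
  φ : Z.M ⟶ Z'.M
  ψ : Z'.N ⟶ Z.N
  condf : ∀ i, φ ≫ Z'.f i = Z.f i ≫ (Hs i).starMap ψ
  condg : ∀ i, φ ≫ Z'.g i = Z.g i ≫ (Hs i).starMap ψ

instance category : Category (TDAObj Hs) where
  Hom := Hom
  id Z := ⟨𝟙 Z.M, 𝟙 Z.N, fun i => by simp [(Hs i).starMap_id],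
    fun i => by simp [(Hs i).starMap_id]⟩
  comp {Z Z' Z''} u v := ⟨u.φ ≫ v.φ, v.ψ ≫ u.ψ,
    fun i => by
      rw [Category.assoc, v.condf i, ← Category.assoc, u.condf i, (Hs i).starMap_comp,
        Category.assoc],
    fun i => by
      rw [Category.assoc, v.condg i, ← Category.assoc, u.condg i, (Hs i).starMap_comp,
        Category.assoc]⟩
  id_comp u := by apply Hom.ext <;> simp
  comp_id u := by apply Hom.ext <;> simp
  assoc u v w := by apply Hom.ext <;> simp

@[simp] theorem id_φ (Z : TDAObj Hs) : Hom.φ (𝟙 Z) = 𝟙 Z.M := rfl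
@[simp] theorem id_ψ (Z : TDAObj Hs) : Hom.ψ (𝟙 Z) = 𝟙 Z.N := rfl
@[simp] theorem comp_φ {Z Z' Z'' : TDAObj Hs} (u : Z ⟶ Z') (v : Z' ⟶ Z'') :
    (u ≫ v).φ = u.φ ≫ v.φ := rfl
@[simp] theorem comp_ψ {Z Z' Z'' : TDAObj Hs} (u : Z ⟶ Z') (v : Z' ⟶ Z'') :
    (u ≫ v).ψ = v.ψ ≫ u.ψ := rfl

theorem hom_ext {Z Z' : TDAObj Hs} {u v : Z ⟶ Z'} (h1 : Hom.φ u = Hom.φ v)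
    (h2 : Hom.ψ u = Hom.ψ v) : u = v := Hom.ext h1 h2

instance homZero (Z Z' : TDAObj Hs) : Zero (Z ⟶ Z') :=
  ⟨⟨0, 0, fun i => by simp [(Hs i).starMap_zero], fun i => by simp [(Hs i).starMap_zero]⟩⟩

instance homAdd (Z Z' : TDAObj Hs) : Add (Z ⟶ Z') :=
  ⟨fun u v => ⟨u.φ + v.φ, u.ψ + v.ψ,
    fun i => by simp [Preadditive.add_comp, Preadditive.comp_add, (Hs i).starMap_add,
      u.condf i, v.condf i],
    fun i => by simp [Preadditive.add_comp, Preadditive.comp_add, (Hs i).starMap_add,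
      u.condg i, v.condg i]⟩⟩

instance homNeg (Z Z' : TDAObj Hs) : Neg (Z ⟶ Z') :=
  ⟨fun u => ⟨-u.φ, -u.ψ,
    fun i => by simp [Preadditive.neg_comp, Preadditive.comp_neg, (Hs i).starMap_neg,
      u.condf i],
    fun i => by simp [Preadditive.neg_comp, Preadditive.comp_neg, (Hs i).starMap_neg,
      u.condg i]⟩⟩

instance homSub (Z Z' : TDAObj Hs) : Sub (Z ⟶ Z') :=
  ⟨fun u v => ⟨u.φ - v.φ, u.ψ - v.ψ,
    fun i => by simp [Preadditive.sub_comp, Preadditive.comp_sub, (Hs i).starMap_sub,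
      u.condf i, v.condf i],
    fun i => by simp [Preadditive.sub_comp, Preadditive.comp_sub, (Hs i).starMap_sub,
      u.condg i, v.condg i]⟩⟩

instance homSMulNat (Z Z' : TDAObj Hs) : SMul ℕ (Z ⟶ Z') :=
  ⟨fun n u => ⟨n • u.φ, n • u.ψ,
    fun i => by simp [Preadditive.nsmul_comp, Preadditive.comp_nsmul, (Hs i).starMap_nsmul,
      u.condf i],
    fun i => by simp [Preadditive.nsmul_comp, Preadditive.comp_nsmul, (Hs i).starMap_nsmul,
      u.condg i]⟩⟩

instance homSMulInt (Z Z' : TDAObj Hs) : SMul ℤ (Z ⟶ Z') :=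
  ⟨fun n u => ⟨n • u.φ, n • u.ψ,
    fun i => by simp [Preadditive.zsmul_comp, Preadditive.comp_zsmul, (Hs i).starMap_zsmul,
      u.condf i],
    fun i => by simp [Preadditive.zsmul_comp, Preadditive.comp_zsmul, (Hs i).starMap_zsmul,
      u.condg i]⟩⟩

@[simp] theorem add_φ {Z Z' : TDAObj Hs} (u v : Z ⟶ Z') : (u + v).φ = u.φ + v.φ := rfl
@[simp] theorem add_ψ {Z Z' : TDAObj Hs} (u v : Z ⟶ Z') : (u + v).ψ = u.ψ + v.ψ := rfl
@[simp] theorem zero_φ {Z Z' : TDAObj Hs} : (0 : Z ⟶ Z').φ = 0 := rfl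
@[simp] theorem zero_ψ {Z Z' : TDAObj Hs} : (0 : Z ⟶ Z').ψ = 0 := rfl
@[simp] theorem neg_φ {Z Z' : TDAObj Hs} (u : Z ⟶ Z') : (-u).φ = -u.φ := rfl
@[simp] theorem neg_ψ {Z Z' : TDAObj Hs} (u : Z ⟶ Z') : (-u).ψ = -u.ψ := rfl

instance homAddCommGroup (Z Z' : TDAObj Hs) : AddCommGroup (Z ⟶ Z') :=
  Function.Injective.addCommGroup (fun u => (Hom.φ u, Hom.ψ u))
    (fun u v h => by
      apply hom_ext
      · exact congrArg Prod.fst h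
      · exact congrArg Prod.snd h)
    rfl (fun _ _ => rfl) (fun _ => rfl) (fun _ _ => rfl) (fun _ _ => rfl) (fun _ _ => rfl)

instance preadditive : Preadditive (TDAObj Hs) where
  add_comp Z Z' Z'' u u' v := by apply hom_ext <;> simp
  comp_add Z Z' Z'' u v v' := by apply hom_ext <;> simp

end TDAObj

/-- The hermitian structure on the category of twisted double `I`-arrows. -/
def tdaHerm (Hs : ι → HermStructure C) : HermStructure (TDAObj Hs) where
  star Z := ⟨Z.N, Z.M, fun i => (Hs i).omega Z.N ≫ (Hs i).starMap (Z.g i),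
    fun i => (Hs i).omega Z.N ≫ (Hs i).starMap (Z.f i)⟩
  starMap {Z Z'} u := ⟨u.ψ, u.φ,
    fun i => by
      rw [← Category.assoc, (Hs i).omega_natural u.ψ, Category.assoc, Category.assoc,
        ← (Hs i).starMap_comp, ← u.condg i, (Hs i).starMap_comp],
    fun i => by
      rw [← Category.assoc, (Hs i).omega_natural u.ψ, Category.assoc, Category.assoc,
        ← (Hs i).starMap_comp, ← u.condf i, (Hs i).starMap_comp]⟩
  starMap_id Z := by apply TDAObj.hom_ext <;> rfl
  starMap_comp u v := by apply TDAObj.hom_ext <;> rfl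
  starMap_add u v := by apply TDAObj.hom_ext <;> rfl
  omega Z := ⟨𝟙 Z.M, 𝟙 Z.N,
    fun i => by
      simp only [Category.id_comp, (Hs i).starMap_id, Category.comp_id]
      rw [(Hs i).starMap_comp, ← Category.assoc, ← (Hs i).omega_natural (Z.f i),
        Category.assoc, (Hs i).omega_star, Category.comp_id],
    fun i => by
      simp only [Category.id_comp, (Hs i).starMap_id, Category.comp_id]
      rw [(Hs i).starMap_comp, ← Category.assoc, ← (Hs i).omega_natural (Z.g i),
        Category.assoc, (Hs i).omega_star, Category.comp_id]⟩
  omega_natural u := by apply TDAObj.hom_ext <;> simp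
  omega_star Z := by apply TDAObj.hom_ext <;> simp

/-! ## Biproducts in `TDA_I(C)` -/

namespace TDAObj

variable {Hs : ι → HermStructure C} [HasBinaryBiproducts C]

/-- The biproduct of two objects of `TDA_I(C)`. -/
def biprodObj (Z W : TDAObj Hs) : TDAObj Hs where
  M := Z.M ⊞ W.M
  N := Z.N ⊞ W.N
  f i := biprod.desc (Z.f i ≫ (Hs i).starMap biprod.fst) (W.f i ≫ (Hs i).starMap biprod.snd)
  g i := biprod.desc (Z.g i ≫ (Hs i).starMap biprod.fst) (W.g i ≫ (Hs i).starMap biprod.snd)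

/-- The binary bicone exhibiting `biprodObj Z W` as a biproduct. -/
def biprodBicone (Z W : TDAObj Hs) : BinaryBicone Z W where
  pt := biprodObj Z W
  fst := ⟨biprod.fst, biprod.inl,
    fun i => by
      apply biprod.hom_ext' <;>
      simp [biprodObj, ← (Hs i).starMap_comp, (Hs i).starMap_zero, (Hs i).starMap_id],
    fun i => by
      apply biprod.hom_ext' <;>
      simp [biprodObj, ← (Hs i).starMap_comp, (Hs i).starMap_zero, (Hs i).starMap_id]⟩
  snd := ⟨biprod.snd, biprod.inr,
    fun i => by
      apply biprod.hom_ext' <;>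
      simp [biprodObj, ← (Hs i).starMap_comp, (Hs i).starMap_zero, (Hs i).starMap_id],
    fun i => by
      apply biprod.hom_ext' <;>
      simp [biprodObj, ← (Hs i).starMap_comp, (Hs i).starMap_zero, (Hs i).starMap_id]⟩
  inl := ⟨biprod.inl, biprod.fst,
    fun i => by simp [biprodObj],
    fun i => by simp [biprodObj]⟩
  inr := ⟨biprod.inr, biprod.snd,
    fun i => by simp [biprodObj],
    fun i => by simp [biprodObj]⟩
  inl_fst := by apply hom_ext <;> first | exact biprod.inl_fst | exact biprod.inl_snd | exact biprod.inr_fst | exact biprod.inr_snd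
  inl_snd := by apply hom_ext <;> first | exact biprod.inl_fst | exact biprod.inl_snd | exact biprod.inr_fst | exact biprod.inr_snd
  inr_fst := by apply hom_ext <;> first | exact biprod.inl_fst | exact biprod.inl_snd | exact biprod.inr_fst | exact biprod.inr_snd
  inr_snd := by apply hom_ext <;> first | exact biprod.inl_fst | exact biprod.inl_snd | exact biprod.inr_fst | exact biprod.inr_snd

instance hasBinaryBiproducts : HasBinaryBiproducts (TDAObj Hs) where
  has_binary_biproduct Z W :=
    hasBinaryBiproduct_of_total (biprodBicone Z W) (by apply hom_ext <;> exact biprod.total)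

end TDAObj

/-! ## Isomorphisms in `TDA_I(C)` -/

namespace TDAObj

variable {Hs : ι → HermStructure C}

theorem isIso_of {Z Z' : TDAObj Hs} (u : Z ⟶ Z') (h1 : IsIso u.φ) (h2 : IsIso u.ψ) :
    IsIso u := by
  refine ⟨⟨⟨inv u.φ, inv u.ψ, fun i => ?_, fun i => ?_⟩, ?_, ?_⟩⟩
  · have h := u.condf i
    have : Z'.f i = inv u.φ ≫ Z.f i ≫ (Hs i).starMap u.ψ := by
      rw [← h, IsIso.inv_hom_id_assoc]
    rw [this, Category.assoc, Category.assoc, ← (Hs i).starMap_comp,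
      IsIso.inv_hom_id, (Hs i).starMap_id, Category.comp_id]
  · have h := u.condg i
    have : Z'.g i = inv u.φ ≫ Z.g i ≫ (Hs i).starMap u.ψ := by
      rw [← h, IsIso.inv_hom_id_assoc]
    rw [this, Category.assoc, Category.assoc, ← (Hs i).starMap_comp,
      IsIso.inv_hom_id, (Hs i).starMap_id, Category.comp_id]
  · apply hom_ext <;> simp
  · apply hom_ext <;> simp

end TDAObj

/-! ## Categories of (systems of) sesquilinear forms -/

/-- Objects of the category `Sesq(C)` of sesquilinear forms over `(C, H)`. -/
structure FormObj (H : HermStructure C) : Type (max u v) where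
  pt : C
  form : pt ⟶ H.star pt

namespace FormObj

variable {H : HermStructure C}

/-- `Sesq(C)`: morphisms are isometries. -/
instance category : Category (FormObj H) where
  Hom X Y := { f : X.pt ⟶ Y.pt // H.IsIsometry X.form Y.form f }
  id X := ⟨𝟙 X.pt, inferInstance, by simp [H.starMap_id]⟩
  comp {X Y Z} u v := ⟨u.1 ≫ v.1, by
    obtain ⟨uf, hu1, hu2⟩ := u
    obtain ⟨vf, hv1, hv2⟩ := v
    haveI := hu1; haveI := hv1
    refine ⟨inferInstance, ?_⟩
    show X.form = (uf ≫ vf) ≫ Z.form ≫ H.starMap (uf ≫ vf)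
    rw [hu2, hv2, H.starMap_comp]
    simp⟩
  id_comp u := by apply Subtype.ext; simp
  comp_id u := by apply Subtype.ext; simp
  assoc u v w := by apply Subtype.ext; simp

@[simp] theorem id_val (X : FormObj H) : (𝟙 X : X ⟶ X).1 = 𝟙 X.pt := rfl
@[simp] theorem comp_val {X Y Z : FormObj H} (u : X ⟶ Y) (v : Y ⟶ Z) :
    (u ≫ v).1 = u.1 ≫ v.1 := rfl

end FormObj

/-- The predicate selecting unimodular `ε`-hermitian forms. -/
def hermPred (H : HermStructure C) (ε : ℤ) : FormObj H → Prop :=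
  fun X => H.IsUnimodular X.form ∧ H.IsEpsHermitian ε X.form

/-- The category `Herm_ε(C)` of unimodular `ε`-hermitian forms over `(C, H)`. -/
abbrev HermFormCat (H : HermStructure C) (ε : ℤ) := ObjectProperty.FullSubcategory (hermPred H ε)

/-- Objects of the category of systems of sesquilinear forms over `(C, {(*_i, ω_i)})`. -/
structure SysFormObj (Hs : ι → HermStructure C) : Type (max u v) where
  pt : C
  form : ∀ i, pt ⟶ (Hs i).star pt

namespace SysFormObj

variable {Hs : ι → HermStructure C}

/-- `f` is an isometry of systems of sesquilinear forms. -/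
def IsIsometry (X Y : SysFormObj Hs) (f : X.pt ⟶ Y.pt) : Prop :=
  IsIso f ∧ ∀ i, X.form i = f ≫ Y.form i ≫ (Hs i).starMap f

/-- Two systems of sesquilinear forms are isometric. -/
def Isometric (X Y : SysFormObj Hs) : Prop := ∃ f, IsIsometry X Y f

/-- The category of systems of sesquilinear forms, with isometries as morphisms. -/
instance category : Category (SysFormObj Hs) where
  Hom X Y := { f : X.pt ⟶ Y.pt // IsIsometry X Y f }
  id X := ⟨𝟙 X.pt, inferInstance, fun i => by simp [(Hs i).starMap_id]⟩
  comp {X Y Z} u v := ⟨u.1 ≫ v.1, by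
    obtain ⟨uf, hu1, hu2⟩ := u
    obtain ⟨vf, hv1, hv2⟩ := v
    haveI := hu1; haveI := hv1
    refine ⟨inferInstance, fun i => ?_⟩
    show X.form i = (uf ≫ vf) ≫ Z.form i ≫ (Hs i).starMap (uf ≫ vf)
    rw [hu2 i, hv2 i, (Hs i).starMap_comp]
    simp⟩
  id_comp u := by apply Subtype.ext; simp
  comp_id u := by apply Subtype.ext; simp
  assoc u v w := by apply Subtype.ext; simp

/-- The orthogonal sum of two systems of sesquilinear forms. -/
def orthSum [HasBinaryBiproducts C] (X Y : SysFormObj Hs) : SysFormObj Hs where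
  pt := X.pt ⊞ Y.pt
  form i := biprod.desc (X.form i ≫ (Hs i).starMap biprod.fst)
    (Y.form i ≫ (Hs i).starMap biprod.snd)

end SysFormObj

/-! ## The functor `F` from (systems of) sesquilinear forms to hermitian forms over `TDA` -/

section FFunctor

variable {Hs : ι → HermStructure C}

theorem HermStructure.omega_starMap_key (H : HermStructure C) {M : C}
    (s : M ⟶ H.star M) :
    H.omega M ≫ H.starMap (H.omega M ≫ H.starMap s) = s := by
  rw [H.starMap_comp, ← Category.assoc, ← H.omega_natural s, Category.assoc,
    H.omega_star, Category.comp_id]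

/-- The twisted double arrow `Z(M, {s_i}) = (M, M, {s_i^* ∘ ω_M}, {s_i})` associated with a
system of sesquilinear forms. -/
def sysZ {M : C} (s : ∀ i, M ⟶ (Hs i).star M) : TDAObj Hs :=
  ⟨M, M, fun i => (Hs i).omega M ≫ (Hs i).starMap (s i), fun i => s i⟩

/-- The canonical `1`-hermitian form `(id_M, id_M^op)` on `Z(M, {s_i})`. -/
def sysZForm {M : C} (s : ∀ i, M ⟶ (Hs i).star M) :
    sysZ s ⟶ (tdaHerm Hs).star (sysZ s) :=
  ⟨𝟙 M, 𝟙 M,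
    fun i => by
      simp only [tdaHerm, sysZ, Category.id_comp, (Hs i).starMap_id, Category.comp_id],
    fun i => by
      simp only [tdaHerm, sysZ, Category.id_comp, (Hs i).starMap_id, Category.comp_id]
      rw [(Hs i).omega_starMap_key]⟩

theorem sysZForm_isIso {M : C} (s : ∀ i, M ⟶ (Hs i).star M) : IsIso (sysZForm s) :=
  TDAObj.isIso_of (sysZForm s) (inferInstanceAs (IsIso (𝟙 M)))
    (inferInstanceAs (IsIso (𝟙 M)))

theorem sysZForm_unimodular {M : C} (s : ∀ i, M ⟶ (Hs i).star M) :
    (tdaHerm Hs).IsUnimodular (sysZForm s) := by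
  constructor
  · exact sysZForm_isIso s
  · exact TDAObj.isIso_of _ (inferInstanceAs (IsIso (𝟙 M ≫ 𝟙 M)))
      (inferInstanceAs (IsIso (𝟙 M ≫ 𝟙 M)))

theorem sysZForm_hermitian {M : C} (s : ∀ i, M ⟶ (Hs i).star M) :
    (tdaHerm Hs).IsEpsHermitian 1 (sysZForm s) := by
  apply TDAObj.hom_ext
  · show 𝟙 M = (1 : ℤ) • (𝟙 M ≫ 𝟙 M)
    simp
  · show 𝟙 M = (1 : ℤ) • (𝟙 M ≫ 𝟙 M)
    simp

/-- The object part of the functor `F`. -/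
def Fobj (X : SysFormObj Hs) : HermFormCat (tdaHerm Hs) 1 :=
  ⟨⟨sysZ X.form, sysZForm X.form⟩, ⟨sysZForm_unimodular X.form, sysZForm_hermitian X.form⟩⟩

/-- The map part of the functor `F`. -/
def Fmap {X Y : SysFormObj Hs} (u : X ⟶ Y) : Fobj X ⟶ Fobj Y := by
  haveI := u.2.1
  refine ⟨(⟨⟨u.1, @inv _ _ _ _ u.1 u.2.1, fun i => ?_, fun i => ?_⟩, ?_, ?_⟩ : (Fobj X).obj ⟶ (Fobj Y).obj)⟩
  · show u.1 ≫ (Hs i).omega Y.pt ≫ (Hs i).starMap (Y.form i) =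
      ((Hs i).omega X.pt ≫ (Hs i).starMap (X.form i)) ≫ (Hs i).starMap (inv u.1)
    calc u.1 ≫ (Hs i).omega Y.pt ≫ (Hs i).starMap (Y.form i)
        = (Hs i).omega X.pt ≫ (Hs i).starMap ((Hs i).starMap u.1) ≫
            (Hs i).starMap (Y.form i) := by
          rw [← Category.assoc, (Hs i).omega_natural u.1, Category.assoc]
      _ = (Hs i).omega X.pt ≫ (Hs i).starMap (Y.form i ≫ (Hs i).starMap u.1) := by
          rw [(Hs i).starMap_comp]
      _ = (Hs i).omega X.pt ≫ (Hs i).starMap (inv u.1 ≫ X.form i) := by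
          rw [u.2.2 i, IsIso.inv_hom_id_assoc]
      _ = ((Hs i).omega X.pt ≫ (Hs i).starMap (X.form i)) ≫ (Hs i).starMap (inv u.1) := by
          rw [(Hs i).starMap_comp, Category.assoc]
  · show u.1 ≫ Y.form i = X.form i ≫ (Hs i).starMap (inv u.1)
    rw [u.2.2 i, Category.assoc, Category.assoc, ← (Hs i).starMap_comp,
      IsIso.inv_hom_id, (Hs i).starMap_id, Category.comp_id]
  · exact TDAObj.isIso_of _ (by show IsIso u.1; infer_instance)
      (by show IsIso (inv u.1); infer_instance)
  · apply TDAObj.hom_ext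
    · show 𝟙 X.pt = u.1 ≫ 𝟙 Y.pt ≫ inv u.1
      simp
    · show 𝟙 X.pt = (u.1 ≫ 𝟙 Y.pt) ≫ inv u.1
      simp

/-- The functor `F` from systems of sesquilinear forms over `(C, {(*_i, ω_i)})` to
unimodular `1`-hermitian forms over `TDA_I(C)`, given by
`F(M, {s_i}) = ((M, M, {s_i^{*_i} ∘ ω_{i,M}}, {s_i}), (id_M, id_M^op))` and
`F(ψ) = (ψ, (ψ⁻¹)^op)`. -/
def Ffunctor (Hs : ι → HermStructure C) : SysFormObj Hs ⥤ HermFormCat (tdaHerm Hs) 1 where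
  obj := Fobj
  map := Fmap
  map_id X := by
    haveI : IsIso ((𝟙 X : X ⟶ X).1) := (𝟙 X : X ⟶ X).2.1
    apply ObjectProperty.hom_ext; apply Subtype.ext; apply TDAObj.hom_ext
    · rfl
    · show inv ((𝟙 X : X ⟶ X).1) = 𝟙 X.pt
      change inv (𝟙 X.pt) = 𝟙 X.pt
      simp
  map_comp {X Y Z} u v := by
    haveI := u.2.1; haveI := v.2.1
    haveI : IsIso ((u ≫ v).1) := (u ≫ v).2.1
    apply ObjectProperty.hom_ext; apply Subtype.ext; apply TDAObj.hom_ext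
    · rfl
    · show inv ((u ≫ v).1) = inv v.1 ≫ inv u.1
      change inv (u.1 ≫ v.1) = inv v.1 ≫ inv u.1
      simp

end FFunctor

/-! ## Hyperbolicity of `F(M, s)` vs splittings -/

section HypSplit

variable {Hs : ι → HermStructure C}

@[simp] theorem tda_starMap_φ {Z Z' : TDAObj Hs} (u : Z ⟶ Z') :
    ((tdaHerm Hs).starMap u).φ = u.ψ := rfl

@[simp] theorem tda_starMap_ψ {Z Z' : TDAObj Hs} (u : Z ⟶ Z') :
    ((tdaHerm Hs).starMap u).ψ = u.φ := rfl

@[simp] theorem tda_omega_φ (Z : TDAObj Hs) : ((tdaHerm Hs).omega Z).φ = 𝟙 Z.M := rfl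

@[simp] theorem tda_omega_ψ (Z : TDAObj Hs) : ((tdaHerm Hs).omega Z).ψ = 𝟙 Z.N := rfl

@[simp] theorem tda_omega_φ_comp (Z : TDAObj Hs) {X : C}
    (f : ((tdaHerm Hs).star ((tdaHerm Hs).star Z)).M ⟶ X) :
    ((tdaHerm Hs).omega Z).φ ≫ f = f := Category.id_comp f

@[simp] theorem tda_omega_ψ_comp (Z : TDAObj Hs) {X : C} (f : Z.N ⟶ X) :
    ((tdaHerm Hs).omega Z).ψ ≫ f = f := Category.id_comp f

theorem tda_star_f (Z : TDAObj Hs) (i : ι) :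
    ((tdaHerm Hs).star Z).f i = (Hs i).omega Z.N ≫ (Hs i).starMap (Z.g i) := rfl

theorem tda_star_g (Z : TDAObj Hs) (i : ι) :
    ((tdaHerm Hs).star Z).g i = (Hs i).omega Z.N ≫ (Hs i).starMap (Z.f i) := rfl

@[simp] theorem sysZ_f {M : C} (s : ∀ i, M ⟶ (Hs i).star M) (i : ι) :
    (sysZ s).f i = (Hs i).omega M ≫ (Hs i).starMap (s i) := rfl

@[simp] theorem sysZ_g {M : C} (s : ∀ i, M ⟶ (Hs i).star M) (i : ι) :
    (sysZ s).g i = s i := rfl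

@[simp] theorem sysZForm_φ {M : C} (s : ∀ i, M ⟶ (Hs i).star M) :
    (sysZForm s).φ = 𝟙 M := rfl

@[simp] theorem sysZForm_ψ {M : C} (s : ∀ i, M ⟶ (Hs i).star M) :
    (sysZForm s).ψ = 𝟙 M := rfl

/-- Every object of `TDA_I(C)` is reflexive. -/
theorem tda_reflexive (Z : TDAObj Hs) : (tdaHerm Hs).Reflexive Z :=
  TDAObj.isIso_of _ (inferInstanceAs (IsIso (𝟙 Z.M))) (inferInstanceAs (IsIso (𝟙 Z.N)))

theorem conj_star (H : HermStructure C) {X Y M : C} (j : X ⟶ M) (k : Y ⟶ M)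
    (t : M ⟶ H.star M) :
    H.omega X ≫ H.starMap (k ≫ t ≫ H.starMap j) =
      j ≫ (H.omega M ≫ H.starMap t) ≫ H.starMap k := by
  rw [H.starMap_comp, H.starMap_comp]
  simp only [← Category.assoc]
  rw [← H.omega_natural j]

theorem hypForm_one_eq {D : Type*} [Category D] [Preadditive D] [HasBinaryBiproducts D]
    (H : HermStructure D) (Q : D) :
    @Eq (Q ⊞ H.star Q ⟶ H.star (Q ⊞ H.star Q)) (H.hypForm 1 Q) (biprod.snd ≫ H.starMap biprod.fst +
      (biprod.fst ≫ H.omega Q) ≫ H.starMap biprod.snd) := by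
  simp only [HermStructure.hypForm, one_smul]
  exact biprod.lift_desc

section Split

variable [HasBinaryBiproducts C] {M : C}

/-- The twisted double arrow associated with a splitting `M ≅ M₁ ⊕ M₂`. -/
def splitObj (s : ∀ i, M ⟶ (Hs i).star M) {M₁ M₂ : C}
    (j₁ : M₁ ⟶ M) (j₂ : M₂ ⟶ M) : TDAObj Hs :=
  ⟨M₁, M₂, fun i => j₁ ≫ ((Hs i).omega M ≫ (Hs i).starMap (s i)) ≫ (Hs i).starMap j₂,
    fun i => j₁ ≫ s i ≫ (Hs i).starMap j₂⟩

@[simp] theorem splitObj_f (s : ∀ i, M ⟶ (Hs i).star M) {M₁ M₂ : C}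
    (j₁ : M₁ ⟶ M) (j₂ : M₂ ⟶ M) (i : ι) :
    (splitObj s j₁ j₂).f i
      = j₁ ≫ ((Hs i).omega M ≫ (Hs i).starMap (s i)) ≫ (Hs i).starMap j₂ := rfl

@[simp] theorem splitObj_g (s : ∀ i, M ⟶ (Hs i).star M) {M₁ M₂ : C}
    (j₁ : M₁ ⟶ M) (j₂ : M₂ ⟶ M) (i : ι) :
    (splitObj s j₁ j₂).g i = j₁ ≫ s i ≫ (Hs i).starMap j₂ := rfl

/-- If `M` splits as a direct sum of two totally isotropic subobjects, then `F(M, s)` is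
hyperbolic. -/
theorem sysZForm_isHyperbolic_of_split (s : ∀ i, M ⟶ (Hs i).star M) {M₁ M₂ : C}
    (p₁ : M ⟶ M₁) (p₂ : M ⟶ M₂) (j₁ : M₁ ⟶ M) (j₂ : M₂ ⟶ M)
    (h11 : j₁ ≫ p₁ = 𝟙 M₁) (h22 : j₂ ≫ p₂ = 𝟙 M₂)
    (h12 : j₁ ≫ p₂ = 0) (h21 : j₂ ≫ p₁ = 0)
    (htot : p₁ ≫ j₁ + p₂ ≫ j₂ = 𝟙 M)
    (hiso1 : ∀ i, j₁ ≫ s i ≫ (Hs i).starMap j₁ = 0)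
    (hiso2 : ∀ i, j₂ ≫ s i ≫ (Hs i).starMap j₂ = 0) :
    (tdaHerm Hs).IsHyperbolic 1 (sysZForm s) := by
  have hiso1' : ∀ i,
      j₁ ≫ ((Hs i).omega M ≫ (Hs i).starMap (s i)) ≫ (Hs i).starMap j₁ = 0 := by
    intro i
    rw [← conj_star (Hs i) j₁ j₁ (s i), hiso1 i, (Hs i).starMap_zero, comp_zero]
  have hiso2' : ∀ i,
      j₂ ≫ ((Hs i).omega M ≫ (Hs i).starMap (s i)) ≫ (Hs i).starMap j₂ = 0 := by
    intro i
    rw [← conj_star (Hs i) j₂ j₂ (s i), hiso2 i, (Hs i).starMap_zero, comp_zero]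
  have hk1 : ∀ {X : C} (a : M ⟶ X), j₂ ≫ a = 0 → p₁ ≫ j₁ ≫ a = a := by
    intro X a h
    have h' : (p₁ ≫ j₁ + p₂ ≫ j₂) ≫ a = a := by rw [htot, Category.id_comp]
    rw [Preadditive.add_comp, Category.assoc, Category.assoc, h, comp_zero,
      add_zero] at h'
    exact h'
  have hk2 : ∀ {X : C} (a : M ⟶ X), j₁ ≫ a = 0 → p₂ ≫ j₂ ≫ a = a := by
    intro X a h
    have h' : (p₁ ≫ j₁ + p₂ ≫ j₂) ≫ a = a := by rw [htot, Category.id_comp]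
    rw [Preadditive.add_comp, Category.assoc, Category.assoc, h, comp_zero,
      zero_add] at h'
    exact h'
  have hstot : ∀ i, (Hs i).starMap (p₁ ≫ j₁) + (Hs i).starMap (p₂ ≫ j₂)
      = 𝟙 ((Hs i).star M) := by
    intro i
    rw [← (Hs i).starMap_add, htot, (Hs i).starMap_id]
  have hk3 : ∀ (i : ι) {X : C} (b : X ⟶ (Hs i).star M),
      b ≫ (Hs i).starMap j₁ = 0 → b ≫ (Hs i).starMap (p₂ ≫ j₂) = b := by
    intro i X b h
    have h' : b ≫ ((Hs i).starMap (p₁ ≫ j₁) + (Hs i).starMap (p₂ ≫ j₂)) = b := by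
      rw [hstot i, Category.comp_id]
    rw [Preadditive.comp_add, (Hs i).starMap_comp p₁ j₁, ← Category.assoc, h,
      zero_comp, zero_add] at h'
    exact h'
  have hk4 : ∀ (i : ι) {X : C} (b : X ⟶ (Hs i).star M),
      b ≫ (Hs i).starMap j₂ = 0 → b ≫ (Hs i).starMap (p₁ ≫ j₁) = b := by
    intro i X b h
    have h' : b ≫ ((Hs i).starMap (p₁ ≫ j₁) + (Hs i).starMap (p₂ ≫ j₂)) = b := by
      rw [hstot i, Category.comp_id]
    rw [Preadditive.comp_add, (Hs i).starMap_comp p₂ j₂, ← Category.assoc b, h,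
      zero_comp, add_zero] at h'
    exact h'
  -- the twisted double arrow `Q`
  have hQf' : ∀ i, ((tdaHerm Hs).star (splitObj s j₁ j₂)).f i
      = j₂ ≫ ((Hs i).omega M ≫ (Hs i).starMap (s i)) ≫ (Hs i).starMap j₁ := fun i =>
    conj_star (Hs i) j₂ j₁ (s i)
  have hQg' : ∀ i, ((tdaHerm Hs).star (splitObj s j₁ j₂)).g i
      = j₂ ≫ s i ≫ (Hs i).starMap j₁ := by
    intro i
    have h := conj_star (Hs i) j₂ j₁ ((Hs i).omega M ≫ (Hs i).starMap (s i))
    rw [(Hs i).omega_starMap_key (s i)] at h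
    exact h
  -- the four structure morphisms
  obtain ⟨u₁, hu₁φ, hu₁ψ⟩ : ∃ u : sysZ s ⟶ splitObj s j₁ j₂, u.φ = p₁ ∧ u.ψ = j₂ := by
    refine ⟨⟨p₁, j₂, fun i => hk1 _ (hiso2' i), fun i => hk1 _ (hiso2 i)⟩, rfl, rfl⟩
  obtain ⟨u₂, hu₂φ, hu₂ψ⟩ :
      ∃ u : sysZ s ⟶ (tdaHerm Hs).star (splitObj s j₁ j₂), u.φ = p₂ ∧ u.ψ = j₁ := by
    refine ⟨⟨p₂, j₁, fun i => ?_, fun i => ?_⟩, rfl, rfl⟩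
    · rw [hQf' i]; exact hk2 _ (hiso1' i)
    · rw [hQg' i]; exact hk2 _ (hiso1 i)
  obtain ⟨v₁, hv₁φ, hv₁ψ⟩ : ∃ v : splitObj s j₁ j₂ ⟶ sysZ s, v.φ = j₁ ∧ v.ψ = p₂ := by
    refine ⟨⟨j₁, p₂, fun i => ?_, fun i => ?_⟩, rfl, rfl⟩
    · have h0 : (j₁ ≫ ((Hs i).omega M ≫ (Hs i).starMap (s i))) ≫ (Hs i).starMap j₁ = 0 := by
        rw [Category.assoc]; exact hiso1' i
      have h1 := hk3 i _ h0
      refine h1.symm.trans ?_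
      show _ = (j₁ ≫ ((Hs i).omega M ≫ (Hs i).starMap (s i)) ≫ (Hs i).starMap j₂)
        ≫ (Hs i).starMap p₂
      rw [(Hs i).starMap_comp]
      simp only [Category.assoc]
    · have h0 : (j₁ ≫ s i) ≫ (Hs i).starMap j₁ = 0 := by
        rw [Category.assoc]; exact hiso1 i
      have h1 := hk3 i _ h0
      refine h1.symm.trans ?_
      show _ = (j₁ ≫ s i ≫ (Hs i).starMap j₂) ≫ (Hs i).starMap p₂
      rw [(Hs i).starMap_comp]
      simp only [Category.assoc]
  obtain ⟨v₂, hv₂φ, hv₂ψ⟩ :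
      ∃ v : (tdaHerm Hs).star (splitObj s j₁ j₂) ⟶ sysZ s, v.φ = j₂ ∧ v.ψ = p₁ := by
    refine ⟨⟨j₂, p₁, fun i => ?_, fun i => ?_⟩, rfl, rfl⟩
    · have h0 : (j₂ ≫ ((Hs i).omega M ≫ (Hs i).starMap (s i))) ≫ (Hs i).starMap j₂ = 0 := by
        rw [Category.assoc]; exact hiso2' i
      have h1 := hk4 i _ h0
      refine h1.symm.trans ?_
      rw [hQf' i]
      show _ = (j₂ ≫ ((Hs i).omega M ≫ (Hs i).starMap (s i)) ≫ (Hs i).starMap j₁)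
        ≫ (Hs i).starMap p₁
      rw [(Hs i).starMap_comp]
      simp only [Category.assoc]
    · have h0 : (j₂ ≫ s i) ≫ (Hs i).starMap j₂ = 0 := by
        rw [Category.assoc]; exact hiso2 i
      have h1 := hk4 i _ h0
      refine h1.symm.trans ?_
      rw [hQg' i]
      show _ = (j₂ ≫ s i ≫ (Hs i).starMap j₁) ≫ (Hs i).starMap p₁
      rw [(Hs i).starMap_comp]
      simp only [Category.assoc]
  -- the isometry
  have hFG : biprod.lift u₁ u₂ ≫ biprod.desc v₁ v₂ = 𝟙 (sysZ s) := by
    rw [biprod.lift_desc]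
    apply TDAObj.hom_ext
    · rw [TDAObj.add_φ, TDAObj.comp_φ, TDAObj.comp_φ, hu₁φ, hu₂φ, hv₁φ, hv₂φ,
        TDAObj.id_φ]
      exact htot
    · rw [TDAObj.add_ψ, TDAObj.comp_ψ, TDAObj.comp_ψ, hu₁ψ, hu₂ψ, hv₁ψ, hv₂ψ,
        TDAObj.id_ψ, add_comm]
      exact htot
  have hGF : biprod.desc v₁ v₂ ≫ biprod.lift u₁ u₂
      = 𝟙 (splitObj s j₁ j₂ ⊞ (tdaHerm Hs).star (splitObj s j₁ j₂)) := by
    apply biprod.hom_ext' <;> apply biprod.hom_ext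
    · simp only [Category.assoc, biprod.inl_desc_assoc, biprod.lift_fst,
        Category.id_comp, biprod.inl_fst]
      apply TDAObj.hom_ext
      · rw [TDAObj.comp_φ, hv₁φ, hu₁φ, TDAObj.id_φ]; exact h11
      · rw [TDAObj.comp_ψ, hv₁ψ, hu₁ψ, TDAObj.id_ψ]; exact h22
    · simp only [Category.assoc, biprod.inl_desc_assoc, biprod.lift_snd,
        Category.id_comp, biprod.inl_snd]
      apply TDAObj.hom_ext
      · rw [TDAObj.comp_φ, hv₁φ, hu₂φ, TDAObj.zero_φ]; exact h12
      · rw [TDAObj.comp_ψ, hv₁ψ, hu₂ψ, TDAObj.zero_ψ]; exact h12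
    · simp only [Category.assoc, biprod.inr_desc_assoc, biprod.lift_fst,
        Category.id_comp, biprod.inr_fst]
      apply TDAObj.hom_ext
      · rw [TDAObj.comp_φ, hv₂φ, hu₁φ, TDAObj.zero_φ]; exact h21
      · rw [TDAObj.comp_ψ, hv₂ψ, hu₁ψ, TDAObj.zero_ψ]; exact h21
    · simp only [Category.assoc, biprod.inr_desc_assoc, biprod.lift_snd,
        Category.id_comp, biprod.inr_snd]
      apply TDAObj.hom_ext
      · rw [TDAObj.comp_φ, hv₂φ, hu₂φ, TDAObj.id_φ]; exact h22
      · rw [TDAObj.comp_ψ, hv₂ψ, hu₂ψ, TDAObj.id_ψ]; exact h11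
  have hIso : IsIso (biprod.lift u₁ u₂) := ⟨biprod.desc v₁ v₂, hFG, hGF⟩
  have su₁ : (tdaHerm Hs).starMap biprod.fst ≫ (tdaHerm Hs).starMap (biprod.lift u₁ u₂)
      = (tdaHerm Hs).starMap u₁ := by
    rw [← (tdaHerm Hs).starMap_comp, biprod.lift_fst]
  have su₂ : (tdaHerm Hs).starMap biprod.snd ≫ (tdaHerm Hs).starMap (biprod.lift u₁ u₂)
      = (tdaHerm Hs).starMap u₂ := by
    rw [← (tdaHerm Hs).starMap_comp, biprod.lift_snd]
  have hform : sysZForm s = biprod.lift u₁ u₂ ≫ (tdaHerm Hs).hypForm 1 (splitObj s j₁ j₂)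
      ≫ (tdaHerm Hs).starMap (biprod.lift u₁ u₂) := by
    unfold HermStructure.hypObj
    rw [hypForm_one_eq, Preadditive.add_comp, Preadditive.comp_add]
    have e1 : biprod.lift u₁ u₂ ≫ (biprod.snd ≫ (tdaHerm Hs).starMap biprod.fst)
          ≫ (tdaHerm Hs).starMap (biprod.lift u₁ u₂)
        = u₂ ≫ (tdaHerm Hs).starMap u₁ := by
      simp only [Category.assoc]
      rw [su₁, biprod.lift_snd_assoc]
    have e2 : biprod.lift u₁ u₂
          ≫ ((biprod.fst ≫ (tdaHerm Hs).omega (splitObj s j₁ j₂))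
            ≫ (tdaHerm Hs).starMap biprod.snd)
          ≫ (tdaHerm Hs).starMap (biprod.lift u₁ u₂)
        = u₁ ≫ (tdaHerm Hs).omega (splitObj s j₁ j₂) ≫ (tdaHerm Hs).starMap u₂ := by
      simp only [Category.assoc]
      rw [su₂, biprod.lift_fst_assoc]
    rw [e1, e2]
    apply TDAObj.hom_ext
    · simp only [TDAObj.add_φ, TDAObj.comp_φ, tda_starMap_φ, tda_omega_φ_comp,
        sysZForm_φ, hu₁φ, hu₂φ, hu₁ψ, hu₂ψ, Category.assoc]
      erw [tda_omega_φ_comp]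
      rw [add_comm]
      exact htot.symm
    · simp only [TDAObj.add_ψ, TDAObj.comp_ψ, tda_starMap_ψ, tda_omega_ψ_comp,
        sysZForm_ψ, hu₁φ, hu₂φ, hu₁ψ, hu₂ψ, Category.assoc]
      erw [Category.assoc, tda_omega_ψ_comp]
      exact htot.symm
  exact ⟨splitObj s j₁ j₂, tda_reflexive _, biprod.lift u₁ u₂, hIso, hform⟩

/-- If `F(M, s)` is hyperbolic then `M` splits as a direct sum of two totally isotropic
subobjects. -/
theorem split_of_sysZForm_isHyperbolic (s : ∀ i, M ⟶ (Hs i).star M)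
    (h : (tdaHerm Hs).IsHyperbolic 1 (sysZForm s)) :
    ∃ (M₁ M₂ : C) (p₁ : M ⟶ M₁) (p₂ : M ⟶ M₂) (j₁ : M₁ ⟶ M) (j₂ : M₂ ⟶ M),
      j₁ ≫ p₁ = 𝟙 M₁ ∧ j₂ ≫ p₂ = 𝟙 M₂ ∧ j₁ ≫ p₂ = 0 ∧ j₂ ≫ p₁ = 0 ∧
      p₁ ≫ j₁ + p₂ ≫ j₂ = 𝟙 M ∧
      (∀ i, j₁ ≫ s i ≫ (Hs i).starMap j₁ = 0) ∧
      (∀ i, j₂ ≫ s i ≫ (Hs i).starMap j₂ = 0) := by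
  obtain ⟨Q, -, u, hu, hform⟩ := h
  haveI := hu
  unfold HermStructure.hypObj at u hu hform
  rw [hypForm_one_eq, Preadditive.add_comp, Preadditive.comp_add] at hform
  have hψ := congrArg TDAObj.Hom.ψ hform
  simp only [sysZForm_ψ, TDAObj.add_ψ, TDAObj.comp_ψ, tda_starMap_ψ, tda_omega_ψ_comp,
    Category.assoc] at hψ
  -- abstract the four components of the isometry
  have main : ∃ (α : M ⟶ Q.M) (β : M ⟶ ((tdaHerm Hs).star Q).M) (γ : Q.M ⟶ M)
      (δ : ((tdaHerm Hs).star Q).M ⟶ M),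
      α ≫ γ + β ≫ δ = 𝟙 M ∧ IsIso (biprod.lift α β) ∧
      (∀ i, s i ≫ (Hs i).starMap δ = α ≫ Q.g i) ∧
      (∀ i, s i ≫ (Hs i).starMap γ = β ≫ ((tdaHerm Hs).star Q).g i) := by
    have pf1 : (u.φ ≫ (biprod.fst : Q ⊞ (tdaHerm Hs).star Q ⟶ Q).φ)
          ≫ ((biprod.snd : Q ⊞ (tdaHerm Hs).star Q ⟶ (tdaHerm Hs).star Q).ψ ≫ u.ψ)
        + (u.φ ≫ (biprod.snd : Q ⊞ (tdaHerm Hs).star Q ⟶ (tdaHerm Hs).star Q).φ)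
          ≫ ((biprod.fst : Q ⊞ (tdaHerm Hs).star Q ⟶ Q).ψ ≫ u.ψ) = 𝟙 M := by
      refine (congrArg₂ (· + ·) rfl (Category.assoc _ _ _).symm).trans hψ.symm
    have hiso_uφ : IsIso u.φ :=
      ⟨(inv u).φ, by rw [← TDAObj.comp_φ, IsIso.hom_inv_id]; rfl,
        by rw [← TDAObj.comp_φ, IsIso.inv_hom_id]; rfl⟩
    have hc : IsIso (biprod.lift (biprod.fst : Q ⊞ (tdaHerm Hs).star Q ⟶ Q).φ
        (biprod.snd : Q ⊞ (tdaHerm Hs).star Q ⟶ (tdaHerm Hs).star Q).φ) := by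
      refine ⟨biprod.desc (biprod.inl : Q ⟶ Q ⊞ (tdaHerm Hs).star Q).φ
        (biprod.inr : (tdaHerm Hs).star Q ⟶ Q ⊞ (tdaHerm Hs).star Q).φ, ?_, ?_⟩
      · rw [biprod.lift_desc]
        have h' := congrArg TDAObj.Hom.φ
          (biprod.total (X := Q) (Y := (tdaHerm Hs).star Q))
        simpa only [TDAObj.add_φ, TDAObj.comp_φ, TDAObj.id_φ] using h'
      · apply biprod.hom_ext' <;> apply biprod.hom_ext <;>
          simp only [Category.assoc, biprod.inl_desc_assoc, biprod.inr_desc_assoc,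
            biprod.lift_fst, biprod.lift_snd, Category.id_comp, Category.comp_id,
            ← TDAObj.comp_φ, biprod.inl_fst, biprod.inl_snd, biprod.inr_fst,
            biprod.inr_snd, TDAObj.id_φ, TDAObj.zero_φ]
    have hLeq : biprod.lift (u.φ ≫ (biprod.fst : Q ⊞ (tdaHerm Hs).star Q ⟶ Q).φ)
          (u.φ ≫ (biprod.snd : Q ⊞ (tdaHerm Hs).star Q ⟶ (tdaHerm Hs).star Q).φ)
        = u.φ ≫ biprod.lift (biprod.fst : Q ⊞ (tdaHerm Hs).star Q ⟶ Q).φ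
          (biprod.snd : Q ⊞ (tdaHerm Hs).star Q ⟶ (tdaHerm Hs).star Q).φ := by
      apply biprod.hom_ext <;> simp
    have pf2 : IsIso (biprod.lift (u.φ ≫ (biprod.fst : Q ⊞ (tdaHerm Hs).star Q ⟶ Q).φ)
        (u.φ ≫ (biprod.snd : Q ⊞ (tdaHerm Hs).star Q ⟶ (tdaHerm Hs).star Q).φ)) := by
      rw [hLeq]
      haveI := hiso_uφ
      haveI := hc
      infer_instance
    have pf3 : ∀ i, s i ≫ (Hs i).starMap
          ((biprod.fst : Q ⊞ (tdaHerm Hs).star Q ⟶ Q).ψ ≫ u.ψ)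
        = (u.φ ≫ (biprod.fst : Q ⊞ (tdaHerm Hs).star Q ⟶ Q).φ) ≫ Q.g i := by
      intro i
      have hcu : u.φ ≫ ((tdaHerm Hs).hypObj Q).g i
          = s i ≫ (Hs i).starMap u.ψ := u.condg i
      have hcf : (biprod.fst : Q ⊞ (tdaHerm Hs).star Q ⟶ Q).φ ≫ Q.g i
          = ((tdaHerm Hs).hypObj Q).g i
            ≫ (Hs i).starMap (biprod.fst : Q ⊞ (tdaHerm Hs).star Q ⟶ Q).ψ :=
        (biprod.fst : Q ⊞ (tdaHerm Hs).star Q ⟶ Q).condg i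
      erw [(Hs i).starMap_comp, ← Category.assoc, ← hcu, Category.assoc, ← hcf,
        ← Category.assoc]
      rfl
    have pf4 : ∀ i, s i ≫ (Hs i).starMap
          ((biprod.snd : Q ⊞ (tdaHerm Hs).star Q ⟶ (tdaHerm Hs).star Q).ψ ≫ u.ψ)
        = (u.φ ≫ (biprod.snd : Q ⊞ (tdaHerm Hs).star Q ⟶ (tdaHerm Hs).star Q).φ)
          ≫ ((tdaHerm Hs).star Q).g i := by
      intro i
      have hcu : u.φ ≫ ((tdaHerm Hs).hypObj Q).g i
          = s i ≫ (Hs i).starMap u.ψ := u.condg i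
      have hcs : (biprod.snd : Q ⊞ (tdaHerm Hs).star Q ⟶ (tdaHerm Hs).star Q).φ
            ≫ ((tdaHerm Hs).star Q).g i
          = ((tdaHerm Hs).hypObj Q).g i ≫ (Hs i).starMap
            (biprod.snd : Q ⊞ (tdaHerm Hs).star Q ⟶ (tdaHerm Hs).star Q).ψ :=
        (biprod.snd : Q ⊞ (tdaHerm Hs).star Q ⟶ (tdaHerm Hs).star Q).condg i
      erw [(Hs i).starMap_comp, ← Category.assoc, ← hcu, Category.assoc, ← hcs,
        ← Category.assoc]
      rfl
    exact ⟨_, _, _, _, pf1, pf2, pf3, pf4⟩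
  obtain ⟨α, β, γ, δ, hsum, hLiso, hg1, hg2⟩ := main
  haveI := hLiso
  have hLD : biprod.lift α β ≫ biprod.desc γ δ = 𝟙 M := by
    rw [biprod.lift_desc]; exact hsum
  have hDL : biprod.desc γ δ ≫ biprod.lift α β
      = 𝟙 (Q.M ⊞ ((tdaHerm Hs).star Q).M) := by
    rw [← cancel_epi (biprod.lift α β), ← Category.assoc, hLD, Category.id_comp,
      Category.comp_id]
  have e11 : γ ≫ α = 𝟙 Q.M := by
    have h' := congrArg (fun t => (biprod.inl : Q.M ⟶ Q.M ⊞ ((tdaHerm Hs).star Q).M)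
      ≫ t ≫ (biprod.fst : Q.M ⊞ ((tdaHerm Hs).star Q).M ⟶ Q.M)) hDL
    simpa using h'
  have e12 : γ ≫ β = 0 := by
    have h' := congrArg (fun t => (biprod.inl : Q.M ⟶ Q.M ⊞ ((tdaHerm Hs).star Q).M)
      ≫ t ≫ (biprod.snd : Q.M ⊞ ((tdaHerm Hs).star Q).M ⟶ ((tdaHerm Hs).star Q).M)) hDL
    simpa using h'
  have e21 : δ ≫ α = 0 := by
    have h' := congrArg (fun t =>
      (biprod.inr : ((tdaHerm Hs).star Q).M ⟶ Q.M ⊞ ((tdaHerm Hs).star Q).M)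
      ≫ t ≫ (biprod.fst : Q.M ⊞ ((tdaHerm Hs).star Q).M ⟶ Q.M)) hDL
    simpa using h'
  have e22 : δ ≫ β = 𝟙 ((tdaHerm Hs).star Q).M := by
    have h' := congrArg (fun t =>
      (biprod.inr : ((tdaHerm Hs).star Q).M ⟶ Q.M ⊞ ((tdaHerm Hs).star Q).M)
      ≫ t ≫ (biprod.snd : Q.M ⊞ ((tdaHerm Hs).star Q).M ⟶ ((tdaHerm Hs).star Q).M)) hDL
    simpa using h'
  have hiso1 : ∀ i, δ ≫ s i ≫ (Hs i).starMap δ = 0 := by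
    intro i
    erw [hg1 i, ← Category.assoc, e21, zero_comp]
  have hiso2 : ∀ i, γ ≫ s i ≫ (Hs i).starMap γ = 0 := by
    intro i
    erw [hg2 i, ← Category.assoc, e12, zero_comp]
  exact ⟨((tdaHerm Hs).star Q).M, Q.M, β, α, δ, γ, e22, e11, e21, e12,
    by rw [add_comm]; exact hsum, hiso1, hiso2⟩

end Split

end HypSplit

end HermCat

namespace SesqRing

open MulOpposite

universe w

/-- An involution of a ring `A`: an additive map with `σ(ab) = σ(b)σ(a)` and `σ² = id`. -/
structure RingInvolution (A : Type*) [Ring A] where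
  toFun : A → A
  map_add' : ∀ a b, toFun (a + b) = toFun a + toFun b
  map_mul' : ∀ a b, toFun (a * b) = toFun b * toFun a
  invol : ∀ a, toFun (toFun a) = a

variable {A : Type*} [Ring A]

instance : FunLike (RingInvolution A) A A where
  coe := RingInvolution.toFun
  coe_injective := by rintro ⟨f, _, _, _⟩ ⟨g, _, _, _⟩ h; simpa using h

namespace RingInvolution

variable (σ : RingInvolution A)

theorem map_add (a b : A) : σ (a + b) = σ a + σ b := σ.map_add' a b
theorem map_mul (a b : A) : σ (a * b) = σ b * σ a := σ.map_mul' a b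
theorem invol_apply (a : A) : σ (σ a) = a := σ.invol a

/-- `σ` as an additive monoid homomorphism. -/
def toAddMonoidHom : A →+ A := AddMonoidHom.mk' σ σ.map_add

theorem map_zero : σ (0 : A) = 0 := σ.toAddMonoidHom.map_zero
theorem map_neg (a : A) : σ (-a) = -σ a := σ.toAddMonoidHom.map_neg a

theorem map_one : σ (1 : A) = 1 := by
  have h := σ.map_mul 1 (σ 1)
  rw [one_mul, invol_apply] at h
  rw [one_mul] at h
  exact h.symm

end RingInvolution

/-- A sesquilinear form over `(A, σ)` on a right `A`-module `M` (presented as a module over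
`Aᵐᵒᵖ`): a biadditive map `s : M × M → A` with `s(xa, yb) = σ(a) s(x, y) b`. -/
structure SesqForm (σ : RingInvolution A) (M : Type w) [AddCommGroup M]
    [Module Aᵐᵒᵖ M] where
  bil : M → M → A
  add_left : ∀ x y z, bil (x + y) z = bil x z + bil y z
  add_right : ∀ x y z, bil x (y + z) = bil x y + bil x z
  smul_left_right : ∀ (a b : A) (x y : M),
    bil (op a • x) (op b • y) = σ a * bil x y * b

namespace SesqForm

variable {σ : RingInvolution A} {M M' : Type w}
  [AddCommGroup M] [Module Aᵐᵒᵖ M] [AddCommGroup M'] [Module Aᵐᵒᵖ M']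

theorem smul_left (s : SesqForm σ M) (a : A) (x y : M) :
    s.bil (op a • x) y = σ a * s.bil x y := by
  have h := s.smul_left_right a 1 x y
  rw [op_one, one_smul, mul_one] at h
  exact h

theorem smul_right (s : SesqForm σ M) (b : A) (x y : M) :
    s.bil x (op b • y) = s.bil x y * b := by
  have h := s.smul_left_right 1 b x y
  rw [op_one, one_smul, σ.map_one, one_mul] at h
  exact h

/-- The orthogonal sum of two sesquilinear forms. -/
def prod (s : SesqForm σ M) (s' : SesqForm σ M') : SesqForm σ (M × M') where
  bil p q := s.bil p.1 q.1 + s'.bil p.2 q.2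
  add_left x y z := by
    show s.bil (x.1 + y.1) z.1 + s'.bil (x.2 + y.2) z.2 = _
    rw [s.add_left, s'.add_left]; abel
  add_right x y z := by
    show s.bil x.1 (y.1 + z.1) + s'.bil x.2 (y.2 + z.2) = _
    rw [s.add_right, s'.add_right]; abel
  smul_left_right a b x y := by
    show s.bil (op a • x.1) (op b • y.1) + s'.bil (op a • x.2) (op b • y.2) = _
    rw [s.smul_left_right, s'.smul_left_right, mul_add, add_mul]

end SesqForm

/-- Isometry of sesquilinear forms over `(A, σ)`. -/
def SesqIsometric {σ : RingInvolution A} {M M' : Type w}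
    [AddCommGroup M] [Module Aᵐᵒᵖ M] [AddCommGroup M'] [Module Aᵐᵒᵖ M']
    (s : SesqForm σ M) (s' : SesqForm σ M') : Prop :=
  ∃ e : M ≃ₗ[Aᵐᵒᵖ] M', ∀ x y, s'.bil (e x) (e y) = s.bil x y

/-- Isometry of systems of sesquilinear forms over `(A, {σ_i})`. -/
def SysSesqIsometric {ι : Type*} {σI : ι → RingInvolution A} {M M' : Type w}
    [AddCommGroup M] [Module Aᵐᵒᵖ M] [AddCommGroup M'] [Module Aᵐᵒᵖ M']
    (s : ∀ i, SesqForm (σI i) M) (s' : ∀ i, SesqForm (σI i) M') : Prop :=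
  ∃ e : M ≃ₗ[Aᵐᵒᵖ] M', ∀ i x y, (s' i).bil (e x) (e y) = (s i).bil x y

/-! ### The twisted dual module -/

/-- The dual `M* = Hom_A(M, A)` of a right `A`-module, as a right `A`-module via
`(f · a)(x) = σ(a) f(x)`. -/
def TwDual (σ : RingInvolution A) (M : Type w) [AddCommGroup M] [Module Aᵐᵒᵖ M] :=
  M →ₗ[Aᵐᵒᵖ] A

namespace TwDual

variable {σ : RingInvolution A} {M : Type w} [AddCommGroup M] [Module Aᵐᵒᵖ M]

instance : AddCommGroup (TwDual σ M) :=
  inferInstanceAs (AddCommGroup (M →ₗ[Aᵐᵒᵖ] A))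

/-- The underlying linear map of an element of the twisted dual. -/
def toLin (f : TwDual σ M) : M →ₗ[Aᵐᵒᵖ] A := f

/-- Build an element of the twisted dual from a linear map. -/
def ofLin (f : M →ₗ[Aᵐᵒᵖ] A) : TwDual σ M := f

theorem toLin_injective : Function.Injective (toLin (σ := σ) (M := M)) := fun _ _ h => h

@[simp] theorem toLin_add (f g : TwDual σ M) : (f + g).toLin = f.toLin + g.toLin := rfl

theorem ext' {f g : TwDual σ M} (h : ∀ x, f.toLin x = g.toLin x) : f = g :=
  toLin_injective (LinearMap.ext h)
@[simp] theorem toLin_zero : (0 : TwDual σ M).toLin = 0 := rfl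

/-- The twisted right action `(f · a)(x) = σ(a) f(x)`. -/
instance : SMul Aᵐᵒᵖ (TwDual σ M) :=
  ⟨fun a f => ofLin
    { toFun := fun x => σ (unop a) * f.toLin x
      map_add' := fun x y => by rw [map_add, mul_add]
      map_smul' := fun b x => by
        show σ (unop a) * f.toLin (b • x) = b • (σ (unop a) * f.toLin x)
        rw [map_smul]
        show σ (unop a) * (f.toLin x * unop b) = (σ (unop a) * f.toLin x) * unop b
        rw [mul_assoc] }⟩

@[simp] theorem smul_toLin (a : Aᵐᵒᵖ) (f : TwDual σ M) (x : M) :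
    (a • f).toLin x = σ (unop a) * f.toLin x := rfl

instance module : Module Aᵐᵒᵖ (TwDual σ M) where
  one_smul f := toLin_injective <| LinearMap.ext fun x => by
    show σ (unop 1) * f.toLin x = f.toLin x
    rw [MulOpposite.unop_one, σ.map_one, one_mul]
  mul_smul a b f := toLin_injective <| LinearMap.ext fun x => by
    show σ (unop (a * b)) * f.toLin x = σ (unop a) * (σ (unop b) * f.toLin x)
    rw [MulOpposite.unop_mul, σ.map_mul, mul_assoc]
  smul_zero a := toLin_injective <| LinearMap.ext fun x => by
    show σ (unop a) * (0 : M →ₗ[Aᵐᵒᵖ] A) x = (0 : M →ₗ[Aᵐᵒᵖ] A) x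
    simp
  smul_add a f g := toLin_injective <| LinearMap.ext fun x => by
    show σ (unop a) * (f.toLin + g.toLin) x = (a • f).toLin x + (a • g).toLin x
    rw [LinearMap.add_apply, mul_add]
    rfl
  add_smul a b f := toLin_injective <| LinearMap.ext fun x => by
    show σ (unop (a + b)) * f.toLin x = (a • f).toLin x + (b • f).toLin x
    rw [MulOpposite.unop_add, σ.map_add, add_mul]
    rfl
  zero_smul f := toLin_injective <| LinearMap.ext fun x => by
    show σ (unop 0) * f.toLin x = (0 : M →ₗ[Aᵐᵒᵖ] A) x
    rw [MulOpposite.unop_zero, σ.map_zero, zero_mul]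
    simp

end TwDual

/-! ### Adjoints, unimodularity, hermitian and hyperbolic forms over `(A, σ)` -/

namespace SesqForm

variable {σ : RingInvolution A} {M : Type w} [AddCommGroup M] [Module Aᵐᵒᵖ M]

/-- The right adjoint `x ↦ (y ↦ σ(s(y, x)))` of a sesquilinear form. -/
def rAdj (s : SesqForm σ M) : M →ₗ[Aᵐᵒᵖ] TwDual σ M where
  toFun x := TwDual.ofLin
    { toFun := fun y => σ (s.bil y x)
      map_add' := fun y z => by rw [s.add_left, σ.map_add]
      map_smul' := fun b y => by
        show σ (s.bil (op (unop b) • y) x) = σ (s.bil y x) * unop b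
        rw [s.smul_left, σ.map_mul, σ.invol_apply] }
  map_add' x y := TwDual.toLin_injective <| LinearMap.ext fun z => by
    show σ (s.bil z (x + y)) = σ (s.bil z x) + σ (s.bil z y)
    rw [s.add_right, σ.map_add]
  map_smul' a x := TwDual.toLin_injective <| LinearMap.ext fun z => by
    show σ (s.bil z (op (unop a) • x)) = σ (unop a) * σ (s.bil z x)
    rw [s.smul_right, σ.map_mul]

/-- The left adjoint `x ↦ (y ↦ s(x, y))` of a sesquilinear form. -/
def lAdj (s : SesqForm σ M) : M →ₗ[Aᵐᵒᵖ] TwDual σ M where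
  toFun x := TwDual.ofLin
    { toFun := fun y => s.bil x y
      map_add' := fun y z => s.add_right x y z
      map_smul' := fun b y => by
        show s.bil x (op (unop b) • y) = s.bil x y * unop b
        exact s.smul_right (unop b) x y }
  map_add' x y := TwDual.toLin_injective <| LinearMap.ext fun z => s.add_left x y z
  map_smul' a x := TwDual.toLin_injective <| LinearMap.ext fun z => by
    show s.bil (op (unop a) • x) z = σ (unop a) * s.bil x z
    exact s.smul_left (unop a) x z

/-- A sesquilinear form is unimodular if both adjoints are bijective. -/
def Unimodular (s : SesqForm σ M) : Prop :=
  Function.Bijective s.rAdj ∧ Function.Bijective s.lAdj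

/-- A sesquilinear form is `ε`-hermitian if `σ(s(x, y)) = ε • s(y, x)`. -/
def IsEpsHermitian (ε : ℤ) (s : SesqForm σ M) : Prop :=
  ∀ x y, σ (s.bil x y) = ε • s.bil y x

end SesqForm

/-- The hyperbolic `ε`-hermitian form `H_ε(V)` on `V ⊕ V*`, given by
`H_ε(V)(x ⊕ f, y ⊕ g) = f(y) + ε σ(g(x))`. -/
def hypSesqForm (ε : ℤ) (σ : RingInvolution A) (V : Type w) [AddCommGroup V]
    [Module Aᵐᵒᵖ V] : SesqForm σ (V × TwDual σ V) where
  bil p q := p.2.toLin q.1 + ε • σ (q.2.toLin p.1)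
  add_left x y z := by
    show (x.2 + y.2).toLin z.1 + ε • σ (z.2.toLin (x.1 + y.1)) = _
    rw [TwDual.toLin_add, LinearMap.add_apply, map_add, σ.map_add, smul_add]
    abel
  add_right x y z := by
    show x.2.toLin (y.1 + z.1) + ε • σ ((y.2 + z.2).toLin x.1) = _
    rw [map_add, TwDual.toLin_add, LinearMap.add_apply, σ.map_add, smul_add]
    abel
  smul_left_right a b x y := by
    show (op a • x.2).toLin (op b • y.1) + ε • σ ((op b • y.2).toLin (op a • x.1)) =
      σ a * (x.2.toLin y.1 + ε • σ (y.2.toLin x.1)) * b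
    rw [TwDual.smul_toLin, TwDual.smul_toLin, map_smul, map_smul,
      MulOpposite.smul_eq_mul_unop, MulOpposite.smul_eq_mul_unop, MulOpposite.unop_op, MulOpposite.unop_op,
      σ.map_mul, σ.map_mul, σ.invol_apply]
    simp only [smul_add, mul_add, add_mul, mul_smul_comm, smul_mul_assoc, mul_assoc]


end SesqRing

namespace SesqRing

open CategoryTheory HermCat MulOpposite

variable {A : Type u} [Ring A]

/-- The dual object functor on objects. -/
def dualStarObj (σ : RingInvolution A) (M : ModuleCat.{u} Aᵐᵒᵖ) : ModuleCat.{u} Aᵐᵒᵖ :=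
  ModuleCat.of Aᵐᵒᵖ (TwDual σ M)

/-- The dual object functor on morphisms. -/
def dualStarMap (σ : RingInvolution A) {M N : ModuleCat.{u} Aᵐᵒᵖ} (f : M ⟶ N) :
    dualStarObj σ N ⟶ dualStarObj σ M := ModuleCat.ofHom
  { toFun := fun g => TwDual.ofLin (TwDual.toLin (σ := σ) g ∘ₗ f.hom)
    map_add' := fun g h => TwDual.toLin_injective (σ := σ) (LinearMap.ext fun _ => rfl)
    map_smul' := fun a g => TwDual.toLin_injective (σ := σ) (LinearMap.ext fun _ => rfl) }

/-- The natural transformation `ω : id → **`, `ω_M(x)(f) = σ(f(x))`. -/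
def dualOmega (σ : RingInvolution A) (M : ModuleCat.{u} Aᵐᵒᵖ) :
    M ⟶ dualStarObj σ (dualStarObj σ M) := ModuleCat.ofHom
  { toFun := fun x => TwDual.ofLin (
    { toFun := fun g => σ (TwDual.toLin (σ := σ) g x)
      map_add' := fun g h => by
        show σ (TwDual.toLin (σ := σ) (g + h) x) =
          σ (TwDual.toLin (σ := σ) g x) + σ (TwDual.toLin (σ := σ) h x)
        exact σ.map_add _ _
      map_smul' := fun a g => by
        show σ (σ (unop a) * TwDual.toLin (σ := σ) g x) = a • σ (TwDual.toLin (σ := σ) g x)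
        rw [σ.map_mul, σ.invol_apply]
        rfl })
    map_add' := fun x y => TwDual.toLin_injective (σ := σ) <| LinearMap.ext fun g => by
      show σ (TwDual.toLin (σ := σ) g (x + y)) =
        σ (TwDual.toLin (σ := σ) g x) + σ (TwDual.toLin (σ := σ) g y)
      rw [map_add, σ.map_add]
    map_smul' := fun a x => TwDual.toLin_injective (σ := σ) <| LinearMap.ext fun g => by
      show σ (TwDual.toLin (σ := σ) g (a • x)) =
        σ (MulOpposite.unop a) * σ (TwDual.toLin (σ := σ) g x)
      rw [map_smul, MulOpposite.smul_eq_mul_unop, σ.map_mul] }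

/-- The hermitian structure induced by the involution `σ` on the category of right
`A`-modules (realized as modules over `Aᵐᵒᵖ`): `M* = Hom_A(M, A)` with the twisted right
action, and `ω_M(x)(f) = σ(f(x))`. -/
def dualHerm (σ : RingInvolution A) : HermStructure (ModuleCat.{u} Aᵐᵒᵖ) where
  star := dualStarObj σ
  starMap := dualStarMap σ
  starMap_id M := by
    apply ModuleCat.hom_ext; apply LinearMap.ext; intro g
    refine TwDual.toLin_injective (σ := σ) ?_
    exact LinearMap.ext fun _ => rfl
  starMap_comp f g := by
    apply ModuleCat.hom_ext; apply LinearMap.ext; intro h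
    refine TwDual.toLin_injective (σ := σ) ?_
    exact LinearMap.ext fun _ => rfl
  starMap_add {M N} f g := by
    apply ModuleCat.hom_ext; apply LinearMap.ext; intro h
    show (dualStarMap σ (f + g)).hom h = (dualStarMap σ f).hom h + (dualStarMap σ g).hom h
    refine TwDual.toLin_injective (σ := σ) ?_
    apply LinearMap.ext; intro x
    show TwDual.toLin (σ := σ) h ((f + g).hom x) =
      TwDual.toLin (σ := σ) h (f.hom x) + TwDual.toLin (σ := σ) h (g.hom x)
    rw [ModuleCat.hom_add, LinearMap.add_apply, map_add]
  omega := dualOmega σ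
  omega_natural {M N} f := by
    apply ModuleCat.hom_ext; apply LinearMap.ext; intro x
    show (dualOmega σ N).hom (f.hom x) = (dualStarMap σ (dualStarMap σ f)).hom ((dualOmega σ M).hom x)
    refine TwDual.toLin_injective (σ := σ) ?_
    exact LinearMap.ext fun g => rfl
  omega_star M := by
    apply ModuleCat.hom_ext; apply LinearMap.ext; intro f
    show (dualStarMap σ (dualOmega σ M)).hom ((dualOmega σ (dualStarObj σ M)).hom f) = f
    refine TwDual.toLin_injective (σ := σ) ?_
    apply LinearMap.ext; intro x
    exact σ.invol_apply (TwDual.toLin (σ := σ) f x)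

/-- The right adjoint of a sesquilinear form `s`, as a morphism `M ⟶ M*` in the hermitian
category of right `A`-modules. -/
def rAdjHom (σ : RingInvolution A) {M : Type u} [AddCommGroup M] [Module Aᵐᵒᵖ M]
    (s : SesqForm σ M) :
    ModuleCat.of Aᵐᵒᵖ M ⟶ (dualHerm σ).star (ModuleCat.of Aᵐᵒᵖ M) :=
  ModuleCat.ofHom s.rAdj

/-- A sesquilinear form `(M, s)` over `(A, σ)` is hyperbolic if the unimodular
`1`-hermitian form `F(M, s_r)` over `TDA(Mod-A)` is hyperbolic. -/
def IsHypRingSesq (σ : RingInvolution A) {M : Type u} [AddCommGroup M] [Module Aᵐᵒᵖ M]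
    (s : SesqForm σ M) : Prop :=
  (tdaHerm (fun _ : PUnit.{u + 1} => dualHerm σ)).IsHyperbolic 1
    (sysZForm (fun _ : PUnit.{u + 1} => rAdjHom σ s))

/-- A system of sesquilinear forms `(M, {s_i})` over `(A, {σ_i})` is hyperbolic if the
unimodular `1`-hermitian form `F(M, {(s_i)_r})` over `TDA_I(Mod-A)` is hyperbolic. -/
def IsHypRingSysSesq {ι : Type u} (σI : ι → RingInvolution A) {M : Type u}
    [AddCommGroup M] [Module Aᵐᵒᵖ M] (s : ∀ i, SesqForm (σI i) M) : Prop :=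
  (tdaHerm (fun i => dualHerm (σI i))).IsHyperbolic 1
    (sysZForm (fun i => rAdjHom (σI i) (s i)))

/-! ## Bridging lemmas between the categorical and module-theoretic notions -/

section Bridge

open HermCat

variable {σ : RingInvolution A} {M : Type u} [AddCommGroup M] [Module Aᵐᵒᵖ M]

theorem isHypRingSesq_of_submodules (σ : RingInvolution A) (s : SesqForm σ M)
    (M₁ M₂ : Submodule Aᵐᵒᵖ M) (hc : IsCompl M₁ M₂)
    (h1 : ∀ x ∈ M₁, ∀ y ∈ M₁, s.bil x y = 0)
    (h2 : ∀ x ∈ M₂, ∀ y ∈ M₂, s.bil x y = 0) :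
    IsHypRingSesq σ s := by
  unfold IsHypRingSesq
  refine HermCat.sysZForm_isHyperbolic_of_split (fun _ : PUnit.{u + 1} => rAdjHom σ s)
    (M₁ := ModuleCat.of Aᵐᵒᵖ M₁) (M₂ := ModuleCat.of Aᵐᵒᵖ M₂)
    (ModuleCat.ofHom (Submodule.linearProjOfIsCompl M₁ M₂ hc))
    (ModuleCat.ofHom (Submodule.linearProjOfIsCompl M₂ M₁ hc.symm))
    (ModuleCat.ofHom M₁.subtype) (ModuleCat.ofHom M₂.subtype) ?_ ?_ ?_ ?_ ?_ ?_ ?_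
  · exact ModuleCat.hom_ext <| LinearMap.ext fun x => Submodule.linearProjOfIsCompl_apply_left hc x
  · exact ModuleCat.hom_ext <| LinearMap.ext fun x => Submodule.linearProjOfIsCompl_apply_left hc.symm x
  · exact ModuleCat.hom_ext <| LinearMap.ext fun x =>
      Submodule.linearProjOfIsCompl_apply_right hc.symm x
  · exact ModuleCat.hom_ext <| LinearMap.ext fun x =>
      Submodule.linearProjOfIsCompl_apply_right hc x
  · exact ModuleCat.hom_ext <| LinearMap.ext fun x =>
      Submodule.projection_add_projection_eq_self hc x
  · intro _
    refine ModuleCat.hom_ext <| LinearMap.ext fun (x : ↥M₁) => TwDual.ext' (σ := σ) fun (y : ↥M₁) => ?_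
    show σ (s.bil ↑y ↑x) = 0
    rw [h1 ↑y y.2 ↑x x.2, σ.map_zero]
  · intro _
    refine ModuleCat.hom_ext <| LinearMap.ext fun (x : ↥M₂) => TwDual.ext' (σ := σ) fun (y : ↥M₂) => ?_
    show σ (s.bil ↑y ↑x) = 0
    rw [h2 ↑y y.2 ↑x x.2, σ.map_zero]

theorem submodules_of_isHypRingSesq (σ : RingInvolution A) (s : SesqForm σ M)
    (h : IsHypRingSesq σ s) :
    ∃ M₁ M₂ : Submodule Aᵐᵒᵖ M, IsCompl M₁ M₂ ∧
      (∀ x ∈ M₁, ∀ y ∈ M₁, s.bil x y = 0) ∧ (∀ x ∈ M₂, ∀ y ∈ M₂, s.bil x y = 0) := by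
  obtain ⟨M₁c, M₂c, p₁, p₂, j₁, j₂, h11, h22, h12, h21, htot, hi1, hi2⟩ :=
    HermCat.split_of_sysZForm_isHyperbolic _ h
  have e11 : ∀ a, p₁.hom (j₁.hom a) = a := fun a =>
    congrArg (fun f => ModuleCat.Hom.hom f a) h11
  have e22 : ∀ a, p₂.hom (j₂.hom a) = a := fun a =>
    congrArg (fun f => ModuleCat.Hom.hom f a) h22
  have e12 : ∀ a, p₂.hom (j₁.hom a) = 0 := fun a =>
    congrArg (fun f => ModuleCat.Hom.hom f a) h12
  have e21 : ∀ a, p₁.hom (j₂.hom a) = 0 := fun a =>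
    congrArg (fun f => ModuleCat.Hom.hom f a) h21
  have etot : ∀ x : M, j₁.hom (p₁.hom x) + j₂.hom (p₂.hom x) = x := fun x =>
    congrArg (fun f => ModuleCat.Hom.hom f x) htot
  have eiso1 : ∀ a b : M₁c, s.bil (j₁.hom b) (j₁.hom a) = 0 := by
    intro a b
    have h0 : σ (s.bil (j₁.hom b) (j₁.hom a)) = 0 :=
      DFunLike.congr_fun (congrArg (TwDual.toLin (σ := σ))
        (congrArg (fun f => ModuleCat.Hom.hom f a) (hi1 PUnit.unit))) b
    have h0' := congrArg σ h0
    rwa [σ.invol_apply, σ.map_zero] at h0'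
  have eiso2 : ∀ a b : M₂c, s.bil (j₂.hom b) (j₂.hom a) = 0 := by
    intro a b
    have h0 : σ (s.bil (j₂.hom b) (j₂.hom a)) = 0 :=
      DFunLike.congr_fun (congrArg (TwDual.toLin (σ := σ))
        (congrArg (fun f => ModuleCat.Hom.hom f a) (hi2 PUnit.unit))) b
    have h0' := congrArg σ h0
    rwa [σ.invol_apply, σ.map_zero] at h0'
  refine ⟨LinearMap.range j₁.hom, LinearMap.range j₂.hom,
    ⟨?_, ?_⟩, ?_, ?_⟩
  · refine Submodule.disjoint_def.mpr fun x hx1 hx2 => ?_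
    obtain ⟨a, ha⟩ := LinearMap.mem_range.mp hx1
    obtain ⟨b, hb⟩ := LinearMap.mem_range.mp hx2
    have ha' : j₁.hom a = x := ha
    have hb' : j₂.hom b = x := hb
    have h' : a = 0 := by
      have h0 := e11 a
      rw [ha', ← hb', e21 b] at h0
      exact h0.symm
    rw [← ha', h', map_zero]
  · refine codisjoint_iff.mpr (Submodule.eq_top_iff'.mpr fun x => ?_)
    exact Submodule.mem_sup.mpr ⟨j₁.hom (p₁.hom x), LinearMap.mem_range.mpr ⟨p₁.hom x, rfl⟩,
      j₂.hom (p₂.hom x), LinearMap.mem_range.mpr ⟨p₂.hom x, rfl⟩, etot x⟩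
  · intro x hx y hy
    obtain ⟨b, rfl⟩ := LinearMap.mem_range.mp hx
    obtain ⟨a, rfl⟩ := LinearMap.mem_range.mp hy
    exact eiso1 a b
  · intro x hx y hy
    obtain ⟨b, rfl⟩ := LinearMap.mem_range.mp hx
    obtain ⟨a, rfl⟩ := LinearMap.mem_range.mp hy
    exact eiso2 a b

theorem sesqIsometric_of_submodules (σ : RingInvolution A) (s : SesqForm σ M) (ε : ℤ)
    (hε : ε = 1 ∨ ε = -1) (hu : s.Unimodular) (hh : s.IsEpsHermitian ε)
    (M₁ M₂ : Submodule Aᵐᵒᵖ M) (hc : IsCompl M₁ M₂)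
    (h1 : ∀ x ∈ M₁, ∀ y ∈ M₁, s.bil x y = 0)
    (h2 : ∀ x ∈ M₂, ∀ y ∈ M₂, s.bil x y = 0) :
    SesqIsometric s (hypSesqForm ε σ ↥M₁) := by
  set π₁ := Submodule.projectionOnto M₁ M₂ hc with hπ₁
  set π₂ := Submodule.projectionOnto M₂ M₁ hc.symm with hπ₂
  have hsum : ∀ x : M, (↑(π₁ x) + ↑(π₂ x) : M) = x := fun x =>
    Submodule.projection_add_projection_eq_self hc x
  obtain ⟨d, hd⟩ : ∃ d : ↥M₂ →ₗ[Aᵐᵒᵖ] TwDual σ ↥M₁,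
      ∀ (x : ↥M₂) (y : ↥M₁), (d x).toLin y = s.bil ↑x ↑y := by
    refine ⟨LinearMap.mk (AddHom.mk (fun x => TwDual.ofLin (σ := σ)
      (LinearMap.mk (AddHom.mk (fun y => s.bil ↑x ↑y) (fun y z => s.add_right _ _ _))
        (fun a y => s.smul_right (MulOpposite.unop a) ↑x ↑y))) ?_) ?_, fun x y => rfl⟩
    · intro x x'
      exact TwDual.toLin_injective (σ := σ)
        (LinearMap.ext fun y => s.add_left ↑x ↑x' ↑y)
    · intro a x
      refine TwDual.toLin_injective (σ := σ) (LinearMap.ext fun y => ?_)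
      show s.bil ((a : Aᵐᵒᵖ) • (x : M)) ↑y = σ (MulOpposite.unop a) * s.bil ↑x ↑y
      exact s.smul_left (MulOpposite.unop a) ↑x ↑y
  have hdinj : Function.Injective d := by
    intro x y hxy
    have hbil : ∀ z : ↥M₁, s.bil ↑x ↑z = s.bil ↑y ↑z := fun z => by
      rw [← hd x z, ← hd y z, hxy]
    have hladj : s.lAdj ↑x = s.lAdj ↑y := by
      refine TwDual.ext' (σ := σ) fun z => ?_
      show s.bil ↑x z = s.bil ↑y z
      calc s.bil ↑x z = s.bil ↑x (↑(π₁ z) + ↑(π₂ z)) := by rw [hsum z]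
        _ = s.bil ↑x ↑(π₁ z) + s.bil ↑x ↑(π₂ z) := s.add_right _ _ _
        _ = s.bil ↑y ↑(π₁ z) + s.bil ↑y ↑(π₂ z) := by
            rw [hbil (π₁ z), h2 ↑x x.2 ↑(π₂ z) (π₂ z).2, h2 ↑y y.2 ↑(π₂ z) (π₂ z).2]
        _ = s.bil ↑y (↑(π₁ z) + ↑(π₂ z)) := (s.add_right _ _ _).symm
        _ = s.bil ↑y z := by rw [hsum z]
    exact Subtype.ext (hu.2.1 hladj)
  have hdsurj : Function.Surjective d := by
    intro h
    obtain ⟨x, hx⟩ := hu.2.2 (TwDual.ofLin (TwDual.toLin h ∘ₗ π₁))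
    refine ⟨π₂ x, TwDual.ext' (σ := σ) fun y => ?_⟩
    have hxy : s.bil x ↑y = TwDual.toLin h (π₁ ↑y) :=
      DFunLike.congr_fun (congrArg (TwDual.toLin (σ := σ)) hx) ↑y
    have hπy : π₁ (↑y : M) = y := Submodule.linearProjOfIsCompl_apply_left hc y
    have hdecomp : s.bil x ↑y = s.bil ↑(π₁ x) ↑y + s.bil ↑(π₂ x) ↑y := by
      rw [← s.add_left, hsum x]
    rw [h1 ↑(π₁ x) (π₁ x).2 ↑y y.2, zero_add] at hdecomp
    rw [hd (π₂ x) y, ← hdecomp, hxy, hπy]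
  obtain ⟨f, hf1, hf2⟩ : ∃ f : M →ₗ[Aᵐᵒᵖ] ↥M₁ × TwDual σ ↥M₁,
      (∀ x, (f x).1 = π₁ x) ∧ (∀ x, (f x).2 = d (π₂ x)) :=
    ⟨LinearMap.prod π₁ (d ∘ₗ π₂), fun x => rfl, fun x => rfl⟩
  have hfinj : Function.Injective f := by
    intro a b hab
    have h1' : π₁ a = π₁ b := by rw [← hf1 a, ← hf1 b, hab]
    have h2' : π₂ a = π₂ b := hdinj (by rw [← hf2 a, ← hf2 b, hab])
    calc a = ↑(π₁ a) + ↑(π₂ a) := (hsum a).symm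
      _ = ↑(π₁ b) + ↑(π₂ b) := by rw [h1', h2']
      _ = b := hsum b
  have hfsurj : Function.Surjective f := by
    rintro ⟨v, w⟩
    obtain ⟨x₂, hx₂⟩ := hdsurj w
    refine ⟨↑v + ↑x₂, Prod.ext ?_ ?_⟩
    · rw [hf1, map_add, Submodule.linearProjOfIsCompl_apply_left hc v,
        Submodule.linearProjOfIsCompl_apply_right hc x₂, add_zero]
    · rw [hf2, map_add, Submodule.linearProjOfIsCompl_apply_right hc.symm v,
        Submodule.linearProjOfIsCompl_apply_left hc.symm x₂, zero_add, hx₂]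
  refine ⟨LinearEquiv.ofBijective f ⟨hfinj, hfsurj⟩, fun x y => ?_⟩
  show (f x).2.toLin (f y).1 + ε • σ ((f y).2.toLin (f x).1) = s.bil x y
  rw [hf1 x, hf1 y, hf2 x, hf2 y, hd, hd, hh ↑(π₂ y) ↑(π₁ x), smul_smul]
  have hε2 : (ε * ε : ℤ) = 1 := by rcases hε with rfl | rfl <;> norm_num
  rw [hε2, one_smul]
  calc s.bil ↑(π₂ x) ↑(π₁ y) + s.bil ↑(π₁ x) ↑(π₂ y)
      = s.bil ↑(π₁ x) ↑(π₁ y) + s.bil ↑(π₂ x) ↑(π₁ y)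
        + (s.bil ↑(π₁ x) ↑(π₂ y) + s.bil ↑(π₂ x) ↑(π₂ y)) := by
        rw [h1 ↑(π₁ x) (π₁ x).2 ↑(π₁ y) (π₁ y).2,
          h2 ↑(π₂ x) (π₂ x).2 ↑(π₂ y) (π₂ y).2, zero_add, add_zero]
    _ = s.bil (↑(π₁ x) + ↑(π₂ x)) ↑(π₁ y) + s.bil (↑(π₁ x) + ↑(π₂ x)) ↑(π₂ y) := by
        rw [s.add_left, s.add_left]
    _ = s.bil (↑(π₁ x) + ↑(π₂ x)) (↑(π₁ y) + ↑(π₂ y)) := (s.add_right _ _ _).symm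
    _ = s.bil x y := by rw [hsum x, hsum y]

theorem submodules_of_sesqIsometric (σ : RingInvolution A) (s : SesqForm σ M) (ε : ℤ)
    (V : Type u) [AddCommGroup V] [Module Aᵐᵒᵖ V]
    (h : SesqIsometric s (hypSesqForm ε σ V)) :
    ∃ M₁ M₂ : Submodule Aᵐᵒᵖ M, IsCompl M₁ M₂ ∧
      (∀ x ∈ M₁, ∀ y ∈ M₁, s.bil x y = 0) ∧ (∀ x ∈ M₂, ∀ y ∈ M₂, s.bil x y = 0) := by
  obtain ⟨e, he⟩ := h
  refine ⟨LinearMap.ker ((LinearMap.snd Aᵐᵒᵖ V (TwDual σ V)).comp e.toLinearMap),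
    LinearMap.ker ((LinearMap.fst Aᵐᵒᵖ V (TwDual σ V)).comp e.toLinearMap),
    ⟨?_, ?_⟩, ?_, ?_⟩
  · refine Submodule.disjoint_def.mpr fun x hx1 hx2 => ?_
    have hx1' : (e x).2 = 0 := hx1
    have hx2' : (e x).1 = 0 := hx2
    have hex : e x = 0 := Prod.ext hx2' hx1'
    have h0 := congrArg e.symm hex
    rwa [e.symm_apply_apply, map_zero] at h0
  · refine codisjoint_iff.mpr (Submodule.eq_top_iff'.mpr fun x => ?_)
    refine Submodule.mem_sup.mpr ⟨e.symm ((e x).1, 0), ?_, e.symm (0, (e x).2), ?_, ?_⟩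
    · show (LinearMap.snd Aᵐᵒᵖ V (TwDual σ V)) (e (e.symm ((e x).1, 0))) = 0
      rw [e.apply_symm_apply]
      rfl
    · show (LinearMap.fst Aᵐᵒᵖ V (TwDual σ V)) (e (e.symm (0, (e x).2))) = 0
      rw [e.apply_symm_apply]
      rfl
    · have hadd : (((e x).1, (0 : TwDual σ V)) : V × TwDual σ V)
          + ((0 : V), (e x).2) = e x := by
        refine Prod.ext ?_ ?_
        · show (e x).1 + 0 = (e x).1
          rw [add_zero]
        · show 0 + (e x).2 = (e x).2
          rw [zero_add]
      calc e.symm ((e x).1, 0) + e.symm (0, (e x).2)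
          = e.symm (((e x).1, 0) + ((0 : V), (e x).2)) := (map_add _ _ _).symm
        _ = e.symm (e x) := by rw [hadd]
        _ = x := e.symm_apply_apply x
  · intro x hx y hy
    have hx' : (e x).2 = 0 := hx
    have hy' : (e y).2 = 0 := hy
    rw [← he x y]
    show (e x).2.toLin (e y).1 + ε • σ ((e y).2.toLin (e x).1) = 0
    rw [hx', hy', TwDual.toLin_zero]
    simp only [LinearMap.zero_apply, σ.map_zero, smul_zero, add_zero]
  · intro x hx y hy
    have hx' : (e x).1 = 0 := hx
    have hy' : (e y).1 = 0 := hy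
    rw [← he x y]
    show (e x).2.toLin (e y).1 + ε • σ ((e y).2.toLin (e x).1) = 0
    rw [hx', hy', map_zero, map_zero, σ.map_zero, smul_zero, add_zero]

end Bridge

end SesqRing


open SesqRing MulOpposite in
/-- A sesquilinear form `(M, s)` over a ring with involution `(A, σ)` is
hyperbolic iff `M = M₁ ⊕ M₂` with `s(M₁, M₁) = s(M₂, M₂) = 0`; and a unimodular
`ε`-hermitian form is hyperbolic as a sesquilinear form iff it is hyperbolic as a
unimodular `ε`-hermitian form. -/
theorem isHypRingSesq_iff {A : Type u} [Ring A] (σ : RingInvolution A)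
    {M : Type u} [AddCommGroup M] [Module Aᵐᵒᵖ M] (s : SesqForm σ M) :
    (IsHypRingSesq σ s ↔ ∃ M₁ M₂ : Submodule Aᵐᵒᵖ M, IsCompl M₁ M₂ ∧
      (∀ x ∈ M₁, ∀ y ∈ M₁, s.bil x y = 0) ∧ (∀ x ∈ M₂, ∀ y ∈ M₂, s.bil x y = 0)) ∧
    (∀ ε : ℤ, (ε = 1 ∨ ε = -1) → s.Unimodular → s.IsEpsHermitian ε →
      (IsHypRingSesq σ s ↔
        ∃ (V : Type u) (_ : AddCommGroup V) (_ : Module Aᵐᵒᵖ V),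
          SesqIsometric s (hypSesqForm ε σ V))) := by
  constructor
  · constructor
    · exact submodules_of_isHypRingSesq σ s
    · rintro ⟨M₁, M₂, hc, h1, h2⟩
      exact isHypRingSesq_of_submodules σ s M₁ M₂ hc h1 h2
  · intro ε hε hu hh
    constructor
    · intro h
      obtain ⟨M₁, M₂, hc, h1, h2⟩ := submodules_of_isHypRingSesq σ s h
      exact ⟨↥M₁, inferInstance, inferInstance,
        sesqIsometric_of_submodules σ s ε hε hu hh M₁ M₂ hc h1 h2⟩
    · rintro ⟨V, _, _, hV⟩
      obtain ⟨M₁, M₂, hc, h1, h2⟩ := submodules_of_sesqIsometric σ s ε V hV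
      exact isHypRingSesq_of_submodules σ s M₁ M₂ hc h1 h2
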